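/- Let U be a block 2×2 unitary of the form U = [[A, B],[C, D]] where all blocks are d×d. Define the 2-regularized unitary V as the 4d×4d matrix with block rows (A, B, 0, 0), (0, 0, C, D), (0, 0, A, B), (C, D, 0, 0). Then V is unitary and the top-left d×d block of V² equals A². -/
import Mathlib

open Matrix

/-- The 2-regularization `V` of a block unitary `U = [[A,B],[C,D]]` (built with one
incrementer qubit) is unitary, and the top-left `d×d` block of `V²` equals `A²`. -/
theorem two_regular_block_encoding {d : ℕ} (A B C D : Matrix (Fin d) (Fin d) ℂ)
    (hU : Matrix.fromBlocks A B C D ∈ Matrix.unitaryGroup (Fin d ⊕ Fin d) ℂ) :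
    Matrix.fromBlocks (Matrix.fromBlocks A B 0 0) (Matrix.fromBlocks 0 0 C D)
        (Matrix.fromBlocks 0 0 C D) (Matrix.fromBlocks A B 0 0) ∈
      Matrix.unitaryGroup ((Fin d ⊕ Fin d) ⊕ (Fin d ⊕ Fin d)) ℂ ∧
    ((Matrix.fromBlocks (Matrix.fromBlocks A B 0 0) (Matrix.fromBlocks 0 0 C D)
        (Matrix.fromBlocks 0 0 C D) (Matrix.fromBlocks A B 0 0) ^ 2).toBlocks₁₁.toBlocks₁₁
      = A ^ 2) := by
  rw [Matrix.mem_unitaryGroup_iff] at hU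
  have hU' : (Matrix.fromBlocks A B C D)ᴴ * Matrix.fromBlocks A B C D = 1 := by
    exact mul_eq_one_comm.mp hU
  rw [Matrix.star_eq_conjTranspose] at hU
  rw [Matrix.fromBlocks_conjTranspose, Matrix.fromBlocks_multiply,
    ← Matrix.fromBlocks_one, Matrix.fromBlocks_inj] at hU hU'
  obtain ⟨h1, h2, h3, h4⟩ := hU
  obtain ⟨h5, h6, h7, h8⟩ := hU'
  constructor
  · rw [Matrix.mem_unitaryGroup_iff]
    show _ * (_)ᴴ = _
    simp only [Matrix.fromBlocks_conjTranspose, Matrix.fromBlocks_multiply,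
      Matrix.conjTranspose_zero, Matrix.mul_zero, Matrix.zero_mul, add_zero, zero_add,
      Matrix.mul_one, Matrix.one_mul]
    simp [h1, h2, h3, h4, Matrix.fromBlocks_add, ← Matrix.fromBlocks_one]
  · simp [pow_two, Matrix.fromBlocks_multiply, Matrix.fromBlocks_add,
      Matrix.toBlocks_fromBlocks₁₁]
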